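/- (Proposition: with ε-accurate inner solves, the exploitability of RM-BR DO never increases by more than 2ε per iteration.) Let A : S₁ × S₂ → ℝ be the payoff matrix of a finite two-player zero-sum game, ε ≥ 0, and let T₁ ⊆ T₁' ⊆ S₁ and T₂ ⊆ T₂' ⊆ S₂ be nonempty. Let x ∈ Δ(T₁) satisfy min_{y'∈Δ(S₂)} v(x, y') ≥ max_{x'∈Δ(T₁)} min_{y'∈Δ(S₂)} v(x', y') − ε, and let x⁺ ∈ Δ(T₁') satisfy the analogous ε-maximin condition for T₁'; let y ∈ Δ(T₂) satisfy max_{x'∈Δ(S₁)} v(x', y) ≤ min_{y'∈Δ(T₂)} max_{x'∈Δ(S₁)} v(x', y') + ε, and let y⁺ ∈ Δ(T₂') satisfy the analogous ε-minimax condition for T₂'. Then e(x⁺, y⁺) ≤ e(x, y) + 2ε. -/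

import Mathlib

open scoped BigOperators

/-- The set of mixed strategies over a finite action set `S`. -/
def mixed (S : Type*) [Fintype S] : Set (S → ℝ) :=
  {x | (∀ a, 0 ≤ x a) ∧ ∑ a, x a = 1}

/-- Mixed strategies supported in a subset `T` of the action set. -/
def mixedOn {S : Type*} [Fintype S] (T : Set S) : Set (S → ℝ) :=
  {x | x ∈ mixed S ∧ ∀ a ∉ T, x a = 0}

/-- Expected payoff to player 1: `v(x,y) = ∑ x(a) A(a,b) y(b)`. -/
def payoff {S₁ S₂ : Type*} [Fintype S₁] [Fintype S₂]
    (A : S₁ → S₂ → ℝ) (x : S₁ → ℝ) (y : S₂ → ℝ) : ℝ :=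
  ∑ a, ∑ b, x a * A a b * y b

/-- `min_{y ∈ Δ(S₂)} v(x,y)`, the value of player 1's strategy `x`
against a best-responding opponent. -/
noncomputable def minVal {S₁ S₂ : Type*} [Fintype S₁] [Fintype S₂]
    (A : S₁ → S₂ → ℝ) (x : S₁ → ℝ) : ℝ :=
  sInf (payoff A x '' mixed S₂)

/-- `max_{x ∈ Δ(S₁)} v(x,y)`, the value of a best response against
player 2's strategy `y`. -/
noncomputable def maxVal {S₁ S₂ : Type*} [Fintype S₁] [Fintype S₂]
    (A : S₁ → S₂ → ℝ) (y : S₂ → ℝ) : ℝ :=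
  sSup ((fun x => payoff A x y) '' mixed S₁)

/-- Exploitability of the profile `(x,y)`:
`e(x,y) = max_{x'} v(x',y) - min_{y'} v(x,y')`. -/
noncomputable def exploit {S₁ S₂ : Type*} [Fintype S₁] [Fintype S₂]
    (A : S₁ → S₂ → ℝ) (x : S₁ → ℝ) (y : S₂ → ℝ) : ℝ :=
  maxVal A y - minVal A x

/-- The mixed strategy placing probability 1 on the pure strategy `a`. -/
def pureStrat {S : Type*} [DecidableEq S] (a : S) : S → ℝ :=
  fun b => if b = a then 1 else 0

section Aux

lemma mixed_le_one {S : Type*} [Fintype S] {x : S → ℝ} (hx : x ∈ mixed S) (a : S) :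
    x a ≤ 1 := by
  rcases hx with ⟨h0, h1⟩
  calc x a ≤ ∑ b, x b := Finset.single_le_sum (fun b _ => h0 b) (Finset.mem_univ a)
    _ = 1 := h1

/-- A uniform bound on |payoff|. -/
noncomputable def Cbound {S₁ S₂ : Type*} [Fintype S₁] [Fintype S₂]
    (A : S₁ → S₂ → ℝ) : ℝ := ∑ a, ∑ b, |A a b|

lemma payoff_abs_le {S₁ S₂ : Type*} [Fintype S₁] [Fintype S₂]
    (A : S₁ → S₂ → ℝ) {x : S₁ → ℝ} {y : S₂ → ℝ}
    (hx : x ∈ mixed S₁) (hy : y ∈ mixed S₂) :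
    |payoff A x y| ≤ Cbound A := by
  unfold payoff Cbound
  calc |∑ a, ∑ b, x a * A a b * y b| ≤ ∑ a, |∑ b, x a * A a b * y b| :=
        Finset.abs_sum_le_sum_abs _ _
    _ ≤ ∑ a, ∑ b, |x a * A a b * y b| :=
        Finset.sum_le_sum (fun a _ => Finset.abs_sum_le_sum_abs _ _)
    _ ≤ ∑ a, ∑ b, |A a b| := by
        refine Finset.sum_le_sum (fun a _ => Finset.sum_le_sum (fun b _ => ?_))
        rw [abs_mul, abs_mul, abs_of_nonneg (hx.1 a), abs_of_nonneg (hy.1 b)]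
        have h1 := mixed_le_one hx a
        have h2 := mixed_le_one hy b
        have h0x := hx.1 a
        have h0y := hy.1 b
        have hA := abs_nonneg (A a b)
        nlinarith [mul_nonneg h0x hA, mul_nonneg (mul_nonneg h0x hA) h0y,
          mul_le_of_le_one_left hA h1]

lemma pureStrat_mem {S : Type*} [Fintype S] [DecidableEq S] {T : Set S} {a : S}
    (ha : a ∈ T) : pureStrat a ∈ mixedOn T := by
  refine ⟨⟨fun b => ?_, ?_⟩, fun b hb => ?_⟩
  · unfold pureStrat; split <;> norm_num
  · simp [pureStrat]
  · unfold pureStrat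
    have : b ≠ a := fun h => hb (h ▸ ha)
    simp [this]

lemma mixed_nonempty (S : Type*) [Fintype S] [Nonempty S] : (mixed S).Nonempty := by
  classical
  exact ⟨pureStrat (Classical.arbitrary S),
    (pureStrat_mem (T := (Set.univ : Set S)) (Set.mem_univ _)).1⟩

lemma mixedOn_nonempty {S : Type*} [Fintype S] {T : Set S} (hT : T.Nonempty) :
    (mixedOn T).Nonempty := by
  classical
  obtain ⟨a, ha⟩ := hT
  exact ⟨pureStrat a, pureStrat_mem ha⟩

lemma minVal_ge {S₁ S₂ : Type*} [Fintype S₁] [Fintype S₂] [Nonempty S₂]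
    (A : S₁ → S₂ → ℝ) {x : S₁ → ℝ} (hx : x ∈ mixed S₁) :
    -Cbound A ≤ minVal A x := by
  refine le_csInf ((mixed_nonempty S₂).image _) ?_
  rintro z ⟨y, hy, rfl⟩
  have := (abs_le.mp (payoff_abs_le A hx hy)).1
  linarith

lemma minVal_bddBelow {S₁ S₂ : Type*} [Fintype S₁] [Fintype S₂]
    (A : S₁ → S₂ → ℝ) {x : S₁ → ℝ} (hx : x ∈ mixed S₁) :
    BddBelow (payoff A x '' mixed S₂) := by
  refine ⟨-Cbound A, ?_⟩
  rintro z ⟨y, hy, rfl⟩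
  have := (abs_le.mp (payoff_abs_le A hx hy)).1
  linarith

lemma minVal_le {S₁ S₂ : Type*} [Fintype S₁] [Fintype S₂] [Nonempty S₂]
    (A : S₁ → S₂ → ℝ) {x : S₁ → ℝ} (hx : x ∈ mixed S₁) :
    minVal A x ≤ Cbound A := by
  obtain ⟨y, hy⟩ := mixed_nonempty S₂
  calc minVal A x ≤ payoff A x y :=
        csInf_le (minVal_bddBelow A hx) (Set.mem_image_of_mem _ hy)
    _ ≤ Cbound A := (abs_le.mp (payoff_abs_le A hx hy)).2

lemma maxVal_le {S₁ S₂ : Type*} [Fintype S₁] [Fintype S₂] [Nonempty S₁]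
    (A : S₁ → S₂ → ℝ) {y : S₂ → ℝ} (hy : y ∈ mixed S₂) :
    maxVal A y ≤ Cbound A := by
  refine csSup_le ((mixed_nonempty S₁).image _) ?_
  rintro z ⟨x, hx, rfl⟩
  exact (abs_le.mp (payoff_abs_le A hx hy)).2

lemma maxVal_bddAbove {S₁ S₂ : Type*} [Fintype S₁] [Fintype S₂]
    (A : S₁ → S₂ → ℝ) {y : S₂ → ℝ} (hy : y ∈ mixed S₂) :
    BddAbove ((fun x => payoff A x y) '' mixed S₁) := by
  refine ⟨Cbound A, ?_⟩
  rintro z ⟨x, hx, rfl⟩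
  exact (abs_le.mp (payoff_abs_le A hx hy)).2

lemma maxVal_ge {S₁ S₂ : Type*} [Fintype S₁] [Fintype S₂] [Nonempty S₁]
    (A : S₁ → S₂ → ℝ) {y : S₂ → ℝ} (hy : y ∈ mixed S₂) :
    -Cbound A ≤ maxVal A y := by
  obtain ⟨x, hx⟩ := mixed_nonempty S₁
  calc -Cbound A ≤ payoff A x y := (abs_le.mp (payoff_abs_le A hx hy)).1
    _ ≤ maxVal A y := le_csSup (maxVal_bddAbove A hy) (Set.mem_image_of_mem _ hx)

lemma minVal_image_bddAbove {S₁ S₂ : Type*} [Fintype S₁] [Fintype S₂] [Nonempty S₂]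
    (A : S₁ → S₂ → ℝ) (T : Set S₁) :
    BddAbove (minVal A '' mixedOn T) := by
  refine ⟨Cbound A, ?_⟩
  rintro z ⟨x, hx, rfl⟩
  exact minVal_le A hx.1

lemma maxVal_image_bddBelow {S₁ S₂ : Type*} [Fintype S₁] [Fintype S₂] [Nonempty S₁]
    (A : S₁ → S₂ → ℝ) (T : Set S₂) :
    BddBelow (maxVal A '' mixedOn T) := by
  refine ⟨-Cbound A, ?_⟩
  rintro z ⟨y, hy, rfl⟩
  exact maxVal_ge A hy.1

end Aux

/-- with ε-accurate inner solves, the exploitability of RM-BR DO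
never increases by more than 2ε per iteration. -/
theorem rmbr_do_exploitability_eps_nonincreasing
    {S₁ S₂ : Type*} [Fintype S₁] [Fintype S₂] [Nonempty S₁] [Nonempty S₂]
    (A : S₁ → S₂ → ℝ) (ε : ℝ) (hε : 0 ≤ ε)
    (T₁ T₁' : Set S₁) (T₂ T₂' : Set S₂)
    (hT₁ : T₁.Nonempty) (hT₂ : T₂.Nonempty)
    (hT₁sub : T₁ ⊆ T₁') (hT₂sub : T₂ ⊆ T₂')
    (x xp : S₁ → ℝ) (y yp : S₂ → ℝ)
    -- x is an ε-accurate maximin solution over Δ(T₁)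
    (hx : x ∈ mixedOn T₁)
    (hxe : sSup (minVal A '' mixedOn T₁) - ε ≤ minVal A x)
    -- x⁺ is an ε-accurate maximin solution over Δ(T₁')
    (hxp : xp ∈ mixedOn T₁')
    (hxpe : sSup (minVal A '' mixedOn T₁') - ε ≤ minVal A xp)
    -- y is an ε-accurate minimax solution over Δ(T₂)
    (hy : y ∈ mixedOn T₂)
    (hye : maxVal A y ≤ sInf (maxVal A '' mixedOn T₂) + ε)
    -- y⁺ is an ε-accurate minimax solution over Δ(T₂')
    (hyp : yp ∈ mixedOn T₂')
    (hype : maxVal A yp ≤ sInf (maxVal A '' mixedOn T₂') + ε) :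
    exploit A xp yp ≤ exploit A x y + 2 * ε := by
  have hmx : minVal A x ≤ minVal A xp + ε := by
    calc minVal A x ≤ sSup (minVal A '' mixedOn T₁) :=
          le_csSup (minVal_image_bddAbove A T₁) (Set.mem_image_of_mem _ hx)
      _ ≤ sSup (minVal A '' mixedOn T₁') := by
          refine csSup_le_csSup (minVal_image_bddAbove A T₁')
            ((mixedOn_nonempty hT₁).image _) (Set.image_mono ?_)
          intro z hz
          exact ⟨hz.1, fun a ha => hz.2 a (fun h => ha (hT₁sub h))⟩
      _ ≤ minVal A xp + ε := by linarith
  have hmy : maxVal A yp ≤ maxVal A y + ε := by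
    calc maxVal A yp ≤ sInf (maxVal A '' mixedOn T₂') + ε := hype
      _ ≤ sInf (maxVal A '' mixedOn T₂) + ε := by
          have : sInf (maxVal A '' mixedOn T₂') ≤ sInf (maxVal A '' mixedOn T₂) := by
            refine csInf_le_csInf (maxVal_image_bddBelow A T₂')
              ((mixedOn_nonempty hT₂).image _) (Set.image_mono ?_)
            intro z hz
            exact ⟨hz.1, fun a ha => hz.2 a (fun h => ha (hT₂sub h))⟩
          linarith
      _ ≤ maxVal A y + ε := by
          refine add_le_add_left ?_ ε
          exact csInf_le (maxVal_image_bddBelow A T₂) (Set.mem_image_of_mem _ hy)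
  unfold exploit
  linarith
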